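/- For positive integers n and k with 1 ≤ k ≤ ⌊n/2⌋, letting m = ⌊n/2⌋, the partial sum of binomial coefficients Σ_{i=0}^{k-1} C(n,i) is strictly less than C(n,k) · 2^(2m-1) / C(2m,m). -/

import Mathlib

lemma aux_ratio (n m : ℕ) (hm : 2*m ≤ n) (k : ℕ) (hk : k ≤ m) :
    ∀ j, j ≤ k → n.choose (k-j) * (2*m).choose m ≤ (2*m).choose (m-j) * n.choose k := by
  intro j
  induction j with
  | zero => intro _; simp [Nat.mul_comm]
  | succ j ih =>
    intro hj
    have hj' : j ≤ k := by omega
    have IH := ih hj'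
    have e1 : n.choose (k-j) * (k-j) = n.choose (k-j-1) * (n - (k-j-1)) := by
      have h := Nat.choose_succ_right_eq n (k-j-1)
      rwa [show k-j-1+1 = k-j by omega] at h
    have e2 : (2*m).choose (m-j) * (m-j) = (2*m).choose (m-j-1) * (2*m - (m-j-1)) := by
      have h := Nat.choose_succ_right_eq (2*m) (m-j-1)
      rwa [show m-j-1+1 = m-j by omega] at h
    have hpos : 0 < (n - (k-j-1)) * (2*m - (m-j-1)) :=
      Nat.mul_pos (by omega) (by omega)
    have key : (n.choose (k-j-1) * (2*m).choose m) * ((n - (k-j-1)) * (2*m - (m-j-1)))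
        ≤ ((2*m).choose (m-j-1) * n.choose k) * ((n - (k-j-1)) * (2*m - (m-j-1))) := by
      calc (n.choose (k-j-1) * (2*m).choose m) * ((n-(k-j-1)) * (2*m-(m-j-1)))
          = (n.choose (k-j-1) * (n-(k-j-1))) * ((2*m).choose m * (2*m-(m-j-1))) := by ring
        _ = (n.choose (k-j) * (k-j)) * ((2*m).choose m * (2*m-(m-j-1))) := by rw [← e1]
        _ = (n.choose (k-j) * (2*m).choose m) * ((k-j) * (2*m-(m-j-1))) := by ring
        _ ≤ ((2*m).choose (m-j) * n.choose k) * ((m-j) * (n-(k-j-1))) :=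
            Nat.mul_le_mul IH (Nat.mul_le_mul (by omega) (by omega))
        _ = ((2*m).choose (m-j) * (m-j)) * (n.choose k * (n-(k-j-1))) := by ring
        _ = ((2*m).choose (m-j-1) * (2*m-(m-j-1))) * (n.choose k * (n-(k-j-1))) := by rw [← e2]
        _ = ((2*m).choose (m-j-1) * n.choose k) * ((n - (k-j-1)) * (2*m - (m-j-1))) := by ring
    have := Nat.le_of_mul_le_mul_right key hpos
    rwa [show k-(j+1) = k-j-1 by omega, show m-(j+1) = m-j-1 by omega]

lemma central_sum (m : ℕ) (hm : 1 ≤ m) :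
    ∑ t ∈ Finset.range m, (2*m).choose t < 2^(2*m-1) := by
  have A := Nat.sum_range_choose (2*m)
  have hsplit : ∑ i ∈ Finset.range (2*m+1), (2*m).choose i
      = ∑ i ∈ Finset.range m, (2*m).choose i + ∑ i ∈ Finset.Ico m (2*m+1), (2*m).choose i := by
    rw [Finset.range_eq_Ico, ← Finset.sum_Ico_consecutive _ (Nat.zero_le m) (by omega),
      ← Finset.range_eq_Ico]
  have hIco : ∑ i ∈ Finset.Ico m (2*m+1), (2*m).choose i
      = ∑ i ∈ Finset.range (m+1), (2*m).choose (m+i) := by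
    rw [Finset.sum_Ico_eq_sum_range, show 2*m+1-m = m+1 by omega]
  have hsucc : ∑ i ∈ Finset.range (m+1), (2*m).choose (m+i)
      = (∑ i ∈ Finset.range m, (2*m).choose (m+(i+1))) + (2*m).choose m := by
    have h := Finset.sum_range_succ' (fun i => (2*m).choose (m+i)) m
    simpa using h
  have B : ∑ i ∈ Finset.range m, (2*m).choose (m+(i+1)) = ∑ i ∈ Finset.range m, (2*m).choose i := by
    rw [← Finset.sum_range_reflect (fun i => (2*m).choose i) m]
    apply Finset.sum_congr rfl
    intro i hi
    simp only [Finset.mem_range] at hi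
    rw [← Nat.choose_symm (show m+(i+1) ≤ 2*m by omega), show 2*m-(m+(i+1)) = m-1-i by omega]
  have hc : 1 ≤ (2*m).choose m := Nat.choose_pos (by omega)
  have h2 : 2^(2*m) = 2 * 2^(2*m-1) := by
    rw [← pow_succ']
    congr 1
    omega
  omega

theorem partial_sum_choose_lt (n k : ℕ) (hk1 : 1 ≤ k) (hk2 : k ≤ n / 2) :
    (∑ i ∈ Finset.range k, (n.choose i : ℝ)) <
      (n.choose k : ℝ) * 2 ^ (2 * (n / 2) - 1) / ((2 * (n / 2)).choose (n / 2) : ℝ) := by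
  set m := n / 2 with hmdef
  have hm2 : 2*m ≤ n := by omega
  have hm1 : 1 ≤ m := le_trans hk1 hk2
  have hstep : ∀ i ∈ Finset.range k,
      n.choose i * (2*m).choose m ≤ (2*m).choose (m-k+i) * n.choose k := by
    intro i hi
    simp only [Finset.mem_range] at hi
    have h := aux_ratio n m hm2 k hk2 (k-i) (by omega)
    rwa [show k-(k-i) = i by omega, show m-(k-i) = m-k+i by omega] at h
  have hsum1 : (∑ i ∈ Finset.range k, n.choose i) * (2*m).choose m
      ≤ (∑ i ∈ Finset.range k, (2*m).choose (m-k+i)) * n.choose k := by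
    rw [Finset.sum_mul, Finset.sum_mul]
    exact Finset.sum_le_sum hstep
  have hre : ∑ t ∈ Finset.Ico (m-k) m, (2*m).choose t
      = ∑ i ∈ Finset.range k, (2*m).choose (m-k+i) := by
    rw [Finset.sum_Ico_eq_sum_range, show m-(m-k) = k by omega]
  have hsub : ∑ t ∈ Finset.Ico (m-k) m, (2*m).choose t
      ≤ ∑ t ∈ Finset.range m, (2*m).choose t := by
    apply Finset.sum_le_sum_of_subset
    rw [Finset.range_eq_Ico]
    exact Finset.Ico_subset_Ico (Nat.zero_le _) le_rfl
  have hckpos : 0 < n.choose k := Nat.choose_pos (by omega)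
  have hnat : (∑ i ∈ Finset.range k, n.choose i) * (2*m).choose m < 2^(2*m-1) * n.choose k := by
    calc (∑ i ∈ Finset.range k, n.choose i) * (2*m).choose m
        ≤ (∑ t ∈ Finset.Ico (m-k) m, (2*m).choose t) * n.choose k := by rw [hre]; exact hsum1
      _ ≤ (∑ t ∈ Finset.range m, (2*m).choose t) * n.choose k :=
          Nat.mul_le_mul_right _ hsub
      _ < 2^(2*m-1) * n.choose k := by
          exact mul_lt_mul_of_pos_right (central_sum m hm1) hckpos
  have hcm : (0:ℝ) < ((2*m).choose m : ℝ) := by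
    exact_mod_cast Nat.choose_pos (by omega)
  rw [lt_div_iff₀ hcm]
  have : ((∑ i ∈ Finset.range k, n.choose i) * (2*m).choose m : ℝ)
      < ((2:ℝ)^(2*m-1) * n.choose k) := by exact_mod_cast hnat
  push_cast at this ⊢
  linarith
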